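/- For b ∈ ℝ, k ≥ 0, and s > 0, the contour/residue computation gives ∫_ℝ (−i/(b−i))^{k+1} e^{isb} db / (2π) = e^{-s} s^k / k!. -/

import Mathlib

open MeasureTheory Filter Set Complex

noncomputable section ResiduePoissonAux

lemma norm_pow_mul_cexp (m : ℕ) (c : ℂ) {t : ℝ} (ht : 0 ≤ t) :
    ‖(t : ℂ) ^ m * Complex.exp (-(c * t))‖ = t ^ m * Real.exp (-(c.re * t)) := by
  rw [norm_mul, norm_pow, Complex.norm_exp]
  simp [Complex.norm_real, _root_.abs_of_nonneg ht]

lemma tendsto_real_pow_mul_exp (m : ℕ) {r : ℝ} (hr : 0 < r) :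
    Tendsto (fun t : ℝ => t ^ m * Real.exp (-(r * t))) atTop (nhds 0) := by
  have h2 := (Real.tendsto_pow_mul_exp_neg_atTop_nhds_zero m).comp
    (tendsto_id.const_mul_atTop hr)
  have h3 := h2.const_mul ((r⁻¹) ^ m)
  rw [mul_zero] at h3
  refine h3.congr (fun t => ?_)
  simp only [Function.comp_apply, id_eq]
  rw [mul_pow]
  field_simp
  ring_nf
  rw [← mul_pow, mul_inv_cancel₀ hr.ne', one_pow, one_mul]

lemma tendsto_pow_mul_cexp (m : ℕ) (c : ℂ) (hc : 0 < c.re) :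
    Tendsto (fun t : ℝ => (t : ℂ) ^ m * Complex.exp (-(c * t))) atTop (nhds 0) := by
  rw [tendsto_zero_iff_norm_tendsto_zero]
  have h1 : ∀ᶠ t : ℝ in atTop, ‖(t : ℂ) ^ m * Complex.exp (-(c * t))‖
      = t ^ m * Real.exp (-(c.re * t)) := by
    filter_upwards [eventually_ge_atTop (0:ℝ)] with t ht
    exact norm_pow_mul_cexp m c ht
  rw [tendsto_congr' h1]
  exact tendsto_real_pow_mul_exp m hc

lemma integrableOn_pow_mul_cexp (m : ℕ) (c : ℂ) (hc : 0 < c.re) :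
    IntegrableOn (fun t : ℝ => (t : ℂ) ^ m * Complex.exp (-(c * t))) (Ioi 0) := by
  have hreal : IntegrableOn (fun t : ℝ => t ^ m * Real.exp (-(c.re) * t)) (Ioi 0) := by
    apply integrable_of_isBigO_exp_neg (half_pos hc)
    · exact ((continuous_pow m).mul (Real.continuous_exp.comp (by continuity))).continuousOn
    · have h : Tendsto (fun t : ℝ => (t ^ m * Real.exp (-(c.re) * t)) / Real.exp (-(c.re/2) * t))
          atTop (nhds 0) := by
        have := tendsto_real_pow_mul_exp m (half_pos hc)
        refine this.congr (fun t => ?_)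
        rw [eq_div_iff (Real.exp_ne_zero _), mul_assoc, ← Real.exp_add]
        ring_nf
      exact (Asymptotics.isLittleO_of_tendsto (fun t h => absurd h (Real.exp_ne_zero _)) h).isBigO
  refine (hreal.mono' ?_ ?_ )
  · exact (Continuous.aestronglyMeasurable (by continuity)).restrict
  · filter_upwards [ae_restrict_mem measurableSet_Ioi] with t ht
    rw [norm_pow_mul_cexp m c (le_of_lt ht), neg_mul]

lemma hasDerivAt_cexp_neg_mul (c : ℂ) (t : ℝ) :
    HasDerivAt (fun t : ℝ => Complex.exp (-(c * t))) (-c * Complex.exp (-(c * t))) t := by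
  have h1 : HasDerivAt (fun t : ℝ => (t : ℂ)) 1 t := by
    simpa using (hasDerivAt_id t).ofReal_comp
  have h2 : HasDerivAt (fun t : ℝ => -(c * (t:ℂ))) (-c) t := by
    simpa using (h1.const_mul c).fun_neg
  simpa [mul_comm] using h2.cexp

lemma integral_pow_mul_cexp (c : ℂ) (hc : 0 < c.re) : ∀ m : ℕ,
    ∫ t in Ioi (0:ℝ), (t : ℂ) ^ m * Complex.exp (-(c * t)) = (Nat.factorial m) / c ^ (m+1) := by
  have hc0 : c ≠ 0 := fun h => by simp [h] at hc
  intro m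
  induction m with
  | zero =>
    have key := integral_Ioi_of_hasDerivAt_of_tendsto (f := fun t : ℝ => -(c⁻¹) * Complex.exp (-(c * t)))
      (f' := fun t : ℝ => Complex.exp (-(c * t))) (a := 0) (m := 0)
      ?_ ?_ ?_ ?_
    · simpa using key
    · exact (Continuous.continuousWithinAt (by fun_prop))
    · intro x _
      have := (hasDerivAt_cexp_neg_mul c x).const_mul (-(c⁻¹))
      convert this using 1
      · rfl
      field_simp
    · simpa using integrableOn_pow_mul_cexp 0 c hc
    · have := (tendsto_pow_mul_cexp 0 c hc).const_mul (-(c⁻¹))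
      simpa using this
  | succ m ih =>
    have key := integral_Ioi_of_hasDerivAt_of_tendsto
      (f := fun t : ℝ => (t:ℂ) ^ (m+1) * Complex.exp (-(c * t)))
      (f' := fun t : ℝ => ((m+1) : ℂ) * ((t:ℂ) ^ m * Complex.exp (-(c * t)))
        - c * ((t:ℂ) ^ (m+1) * Complex.exp (-(c * t)))) (a := 0) (m := 0)
      ?_ ?_ ?_ ?_
    · rw [integral_sub ((integrableOn_pow_mul_cexp m c hc).const_mul _)
        ((integrableOn_pow_mul_cexp (m+1) c hc).const_mul _),
        integral_const_mul, integral_const_mul, ih] at key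
      simp only [Complex.ofReal_zero, zero_pow (Nat.succ_ne_zero m), zero_mul,
        zero_sub] at key
      have h2 : c * ∫ t in Ioi (0:ℝ), (t:ℂ) ^ (m+1) * Complex.exp (-(c * t))
          = ((m:ℂ)+1) * ((Nat.factorial m : ℂ) / c ^ (m+1)) := by
        linear_combination -key
      rw [Nat.factorial_succ]
      push_cast
      rw [eq_div_iff (pow_ne_zero _ hc0)]
      field_simp at h2
      linear_combination h2
    · exact (Continuous.continuousWithinAt (by fun_prop))
    · intro x _
      have h1 : HasDerivAt (fun t : ℝ => (t:ℂ) ^ (m+1)) (((m+1):ℂ) * (x:ℂ)^m) x := by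
        have := (hasDerivAt_pow (m+1) ((x:ℝ):ℂ)).comp_ofReal
        simpa using this
      have := h1.fun_mul (hasDerivAt_cexp_neg_mul c x)
      convert this using 1
      · rfl
      ring
    · exact ((integrableOn_pow_mul_cexp m c hc).const_mul _).sub
        ((integrableOn_pow_mul_cexp (m+1) c hc).const_mul _)
    · simpa using tendsto_pow_mul_cexp (m+1) c hc

lemma one_add_mul_I_ne (x : ℝ) : ((1:ℂ) + (x:ℝ)*I) ≠ 0 := by
  intro h
  simpa using congrArg Complex.re h

lemma norm_bound_aux (a ξ : ℝ) (ha : 1 ≤ a) (n : ℕ) (hn : 2 ≤ n) :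
    (1 + ξ^2) ≤ ‖((1:ℂ) + ((a*ξ:ℝ):ℂ)*I)‖^n := by
  set z : ℂ := (1:ℂ) + ((a*ξ:ℝ):ℂ)*I with hz
  have h2 : ‖z‖^2 = 1 + (a*ξ)^2 := by
    rw [Complex.sq_norm, Complex.normSq_apply]
    simp [hz]
    ring
  have h1a : 1 ≤ a^2 := by nlinarith
  have h4 := mul_le_mul_of_nonneg_right h1a (sq_nonneg ξ)
  have h3 : (1:ℝ) + ξ^2 ≤ ‖z‖^2 := by
    rw [h2]; nlinarith
  have hz1 : 1 ≤ ‖z‖ := by nlinarith [norm_nonneg z, sq_nonneg ξ]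
  calc (1:ℝ) + ξ^2 ≤ ‖z‖^2 := h3
    _ ≤ ‖z‖^n := pow_le_pow_right₀ hz1 hn

lemma integrable_inv_one_add_mul_I_pow (a : ℝ) (ha : 1 ≤ a) (n : ℕ) (hn : 2 ≤ n) :
    Integrable (fun ξ : ℝ => ((((1:ℂ) + ((a*ξ:ℝ):ℂ)*I))^n)⁻¹) := by
  apply Integrable.mono' (g := fun ξ : ℝ => (1 + ξ^2)⁻¹) integrable_inv_one_add_sq
  · apply Continuous.aestronglyMeasurable
    apply Continuous.inv₀
    · fun_prop
    · exact fun ξ => pow_ne_zero _ (one_add_mul_I_ne _)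
  · refine ae_of_all _ (fun ξ => ?_)
    rw [norm_inv, norm_pow]
    exact inv_anti₀ (by positivity) (norm_bound_aux a ξ ha n hn)

noncomputable def fm (m : ℕ) : ℝ → ℂ :=
  Set.indicator (Ioi 0) (fun t : ℝ => (t:ℂ)^m * Complex.exp (-(t:ℂ)))

lemma fm_integrable (m : ℕ) : Integrable (fm m) := by
  rw [fm, integrable_indicator_iff measurableSet_Ioi]
  have := integrableOn_pow_mul_cexp m 1 (by simp)
  simpa using this

lemma fourier_fm (m : ℕ) (ξ : ℝ) :
    FourierTransform.fourier (fm m) ξ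
      = (Nat.factorial m) / ((1:ℂ) + ((2*Real.pi*ξ:ℝ):ℂ)*I)^(m+1) := by
  rw [Real.fourier_eq']
  have h1 : ∀ t : ℝ, Complex.exp (((-2*Real.pi*(t*ξ):ℝ):ℂ)*I) • fm m t
      = Set.indicator (Ioi 0) (fun t : ℝ =>
          (t:ℂ)^m * Complex.exp (-((((1:ℂ) + ((2*Real.pi*ξ:ℝ):ℂ)*I)) * t))) t := by
    intro t
    rw [fm]
    by_cases ht : t ∈ Ioi (0:ℝ)
    · rw [Set.indicator_of_mem ht, Set.indicator_of_mem ht, smul_eq_mul]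
      rw [mul_comm, mul_assoc, ← Complex.exp_add]
      congr 2
      push_cast
      ring
    · rw [Set.indicator_of_notMem ht, Set.indicator_of_notMem ht, smul_zero]
  simp only [RCLike.inner_apply, conj_trivial]
  simp_rw [mul_comm ξ]
  calc (∫ t : ℝ, Complex.exp (((-2*Real.pi*(t*ξ):ℝ):ℂ)*I) • fm m t)
      = ∫ t in Ioi (0:ℝ),
          (t:ℂ)^m * Complex.exp (-((((1:ℂ) + ((2*Real.pi*ξ:ℝ):ℂ)*I)) * t)) := by
        simp_rw [h1]
        rw [integral_indicator measurableSet_Ioi]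
    _ = _ := integral_pow_mul_cexp _ (by simp) m

noncomputable def G (s : ℝ) (n : ℕ) : ℝ → ℂ :=
  fun b => ((((1:ℂ) + (b:ℝ)*I))^n)⁻¹ * Complex.exp (I*s*b)

lemma one_le_two_pi : (1:ℝ) ≤ 2*Real.pi := by nlinarith [Real.pi_gt_three]

lemma G_integrable (s : ℝ) (n : ℕ) (hn : 2 ≤ n) : Integrable (G s n) := by
  have h := integrable_inv_one_add_mul_I_pow 1 le_rfl n hn
  simp only [one_mul] at h
  apply Integrable.mono' h.norm
  · apply Continuous.aestronglyMeasurable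
    apply Continuous.mul
    · apply Continuous.inv₀
      · fun_prop
      · intro ξ
        apply pow_ne_zero
        intro hz
        simpa using congrArg Complex.re hz
    · fun_prop
  · refine ae_of_all _ (fun b => ?_)
    rw [G, norm_mul]
    have : ‖Complex.exp (I*s*b)‖ = 1 := by
      rw [Complex.norm_exp]
      simp [Complex.mul_re]
    rw [this, mul_one]

lemma integral_G (s : ℝ) (hs : 0 < s) (m : ℕ) (hm : 1 ≤ m) :
    ∫ b : ℝ, G s (m+1) b
      = 2*Real.pi * ((s:ℂ)^m * Complex.exp (-(s:ℂ)) / (Nat.factorial m)) := by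
  have hπ : (Real.pi : ℝ) ≠ 0 := Real.pi_ne_zero
  have hF : FourierTransform.fourier (fm m)
      = fun ξ : ℝ => (Nat.factorial m : ℂ) * ((((1:ℂ) + ((2*Real.pi*ξ:ℝ):ℂ)*I))^(m+1))⁻¹ := by
    funext ξ; rw [fourier_fm, div_eq_mul_inv]
  have hFi : Integrable (FourierTransform.fourier (fm m)) := by
    rw [hF]
    exact (integrable_inv_one_add_mul_I_pow (2*Real.pi) one_le_two_pi (m+1)
      (by omega)).const_mul _
  have hcont : ContinuousAt (fm m) s := by
    have hev : (fun t : ℝ => (t:ℂ)^m * Complex.exp (-(t:ℂ))) =ᶠ[nhds s] fm m := by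
      filter_upwards [Ioi_mem_nhds hs] with t ht
      rw [fm, Set.indicator_of_mem ht]
    exact ContinuousAt.congr (by fun_prop) hev
  have hinv := (fm_integrable m).fourierInv_fourier_eq hFi hcont
  rw [Real.fourierInv_eq'] at hinv
  have hfm : fm m s = (s:ℂ)^m * Complex.exp (-(s:ℂ)) := by
    rw [fm, Set.indicator_of_mem (by exact hs)]
  rw [hfm] at hinv
  have hcomp : ∀ ξ : ℝ, Complex.exp (((2*Real.pi*(inner ℝ ξ s : ℝ):ℝ):ℂ)*I) • (FourierTransform.fourier (fm m) ξ)
      = (Nat.factorial m : ℂ) * G s (m+1) (2*Real.pi*ξ) := by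
    intro ξ
    simp only [RCLike.inner_apply, conj_trivial]
    have hexp : Complex.exp (((2*Real.pi*(s*ξ):ℝ):ℂ)*I)
        = Complex.exp (I*(s:ℂ)*((2*Real.pi*ξ:ℝ):ℂ)) := by
      congr 1
      push_cast
      ring
    rw [hF, G, smul_eq_mul, hexp]
    ring
  simp_rw [hcomp] at hinv
  rw [integral_const_mul] at hinv
  have hsub : ∫ ξ : ℝ, G s (m+1) (2*Real.pi*ξ)
      = |(2*Real.pi)⁻¹| • ∫ b : ℝ, G s (m+1) b :=
    MeasureTheory.Measure.integral_comp_mul_left (G s (m+1)) (2*Real.pi)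
  rw [hsub] at hinv
  rw [abs_of_pos (by positivity), real_smul] at hinv
  have hfac : ((Nat.factorial m : ℂ)) ≠ 0 := by
    exact_mod_cast Nat.cast_ne_zero.mpr (Nat.factorial_ne_zero m)
  have h2π : ((2*Real.pi:ℝ):ℂ) ≠ 0 := by
    simpa using (by positivity : (2*Real.pi:ℝ) ≠ 0)
  have hπC : ((Real.pi:ℝ):ℂ) ≠ 0 := by exact_mod_cast hπ
  push_cast at hinv ⊢
  field_simp at hinv ⊢
  linear_combination hinv

lemma G_continuous (s : ℝ) (n : ℕ) : Continuous (G s n) := by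
  apply Continuous.mul
  · exact Continuous.inv₀ (by fun_prop) (fun b => pow_ne_zero _ (one_add_mul_I_ne b))
  · fun_prop

lemma tendsto_G_ge (s : ℝ) (hs : 0 < s) (m : ℕ) (hm : 1 ≤ m) :
    Tendsto (fun R : ℝ => ∫ b in (-R)..R, G s (m+1) b) atTop
      (nhds (2*Real.pi * ((s:ℂ)^m * Complex.exp (-(s:ℂ)) / (Nat.factorial m)))) := by
  rw [← integral_G s hs m hm]
  exact intervalIntegral_tendsto_integral (G_integrable s (m+1) (by omega))
    tendsto_neg_atTop_atBot tendsto_id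

lemma hasDerivAt_H (s : ℝ) (b : ℝ) :
    HasDerivAt (fun b : ℝ => G s 1 b) (I*s*G s 1 b - I*G s 2 b) b := by
  have h1 : HasDerivAt (fun b : ℝ => (b : ℂ)) 1 b := by
    simpa using (hasDerivAt_id b).ofReal_comp
  have h2 : HasDerivAt (fun b : ℝ => (1:ℂ) + (b:ℝ)*I) I b := by
    simpa using ((h1.mul_const I).const_add 1)
  have h3 : HasDerivAt (fun b : ℝ => (((1:ℂ) + (b:ℝ)*I))⁻¹)
      (-I / ((1:ℂ) + (b:ℝ)*I)^2) b := by
    have hd := (hasDerivAt_const b (1:ℂ)).fun_div h2 (one_add_mul_I_ne b)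
    simpa [one_div] using hd
  have h4 : HasDerivAt (fun b : ℝ => Complex.exp (I*s*b))
      (I*s*Complex.exp (I*s*b)) b := by
    have h5 : HasDerivAt (fun b : ℝ => I*(s:ℂ)*(b:ℝ)) (I*s) b := by
      simpa using (h1.const_mul (I*(s:ℂ)))
    simpa [mul_comm] using h5.cexp
  have := h3.fun_mul h4
  have hG : ∀ b : ℝ, G s 1 b = (((1:ℂ) + (b:ℝ)*I))⁻¹ * Complex.exp (I*s*b) := by
    intro b; rw [G]; rw [pow_one]
  simp only [G, pow_one]
  convert this using 1
  · rfl
  field_simp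
  ring

lemma tendsto_H_zero (s : ℝ) : Tendsto (fun R : ℝ => G s 1 R) atTop (nhds 0) := by
  rw [tendsto_zero_iff_norm_tendsto_zero]
  apply squeeze_zero' (g := fun R : ℝ => R⁻¹)
    (Eventually.of_forall (fun _ => norm_nonneg _)) ?_ tendsto_inv_atTop_zero
  filter_upwards [eventually_ge_atTop (1:ℝ)] with R hR
  rw [G, pow_one, norm_mul]
  have he : ‖Complex.exp (I*s*R)‖ = 1 := by
    rw [Complex.norm_exp]
    simp [Complex.mul_re]
  rw [he, mul_one, norm_inv]
  have hn2 : ‖(1:ℂ) + (R:ℝ)*I‖^2 = 1 + R^2 := by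
    rw [Complex.sq_norm, Complex.normSq_apply]
    simp
    ring
  have hge : R ≤ ‖(1:ℂ) + (R:ℝ)*I‖ := by
    nlinarith [norm_nonneg ((1:ℂ) + (R:ℝ)*I)]
  exact inv_anti₀ (by linarith) hge

lemma tendsto_H_zero' (s : ℝ) : Tendsto (fun R : ℝ => G s 1 (-R)) atTop (nhds 0) := by
  rw [tendsto_zero_iff_norm_tendsto_zero]
  apply squeeze_zero' (g := fun R : ℝ => R⁻¹)
    (Eventually.of_forall (fun _ => norm_nonneg _)) ?_ tendsto_inv_atTop_zero
  filter_upwards [eventually_ge_atTop (1:ℝ)] with R hR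
  rw [G, pow_one, norm_mul]
  have he : ‖Complex.exp (I*s*(-R:ℝ))‖ = 1 := by
    rw [Complex.norm_exp]
    simp [Complex.mul_re]
  rw [he, mul_one, norm_inv]
  have hn2 : ‖(1:ℂ) + ((-R:ℝ):ℂ)*I‖^2 = 1 + R^2 := by
    rw [Complex.sq_norm, Complex.normSq_apply]
    simp
    ring
  have hge : R ≤ ‖(1:ℂ) + ((-R:ℝ):ℂ)*I‖ := by
    nlinarith [norm_nonneg ((1:ℂ) + ((-R:ℝ):ℂ)*I)]
  exact inv_anti₀ (by linarith) hge

lemma key_identity (s : ℝ) (hs : 0 < s) (R : ℝ) :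
    ∫ b in (-R)..R, G s 1 b
      = (I*s)⁻¹ * (G s 1 R - G s 1 (-R)) + (s:ℂ)⁻¹ * ∫ b in (-R)..R, G s 2 b := by
  have hs0 : (s:ℂ) ≠ 0 := by exact_mod_cast hs.ne'
  have hftc : ∫ b in (-R)..R, (I*(s:ℂ)*G s 1 b - I*G s 2 b) = G s 1 R - G s 1 (-R) := by
    apply intervalIntegral.integral_eq_sub_of_hasDerivAt (fun b _ => hasDerivAt_H s b)
    apply Continuous.intervalIntegrable
    exact (continuous_const.mul (G_continuous s 1)).sub (continuous_const.mul (G_continuous s 2))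
  rw [intervalIntegral.integral_sub ((continuous_const.fun_mul (G_continuous s 1)).intervalIntegrable _ _)
      ((continuous_const.fun_mul (G_continuous s 2)).intervalIntegrable _ _),
    intervalIntegral.integral_const_mul, intervalIntegral.integral_const_mul] at hftc
  have hIs : I*(s:ℂ) ≠ 0 := mul_ne_zero I_ne_zero hs0
  field_simp
  linear_combination hftc

lemma tendsto_G_one (s : ℝ) (hs : 0 < s) :
    Tendsto (fun R : ℝ => ∫ b in (-R)..R, G s 1 b) atTop
      (nhds (2*Real.pi * Complex.exp (-(s:ℂ)))) := by
  have hs0 : (s:ℂ) ≠ 0 := by exact_mod_cast hs.ne'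
  have h1 := ((tendsto_H_zero s).sub (tendsto_H_zero' s)).const_mul ((I*(s:ℂ))⁻¹)
  have h2 := (tendsto_G_ge s hs 1 le_rfl).const_mul ((s:ℂ)⁻¹)
  have h3 := h1.add h2
  rw [sub_zero, mul_zero, zero_add] at h3
  have : (s:ℂ)⁻¹ * (2*Real.pi * ((s:ℂ)^1 * Complex.exp (-(s:ℂ)) / (Nat.factorial 1)))
      = 2*Real.pi * Complex.exp (-(s:ℂ)) := by
    field_simp
    ring
  rw [this] at h3
  exact h3.congr (fun R => (key_identity s hs R).symm)

/-- Residue computation for the ladder resummation: for `s > 0` and `k ≥ 0`,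
`(1/2π) ∫_ℝ (-i/(b-i))^{k+1} e^{isb} db = e^{-s} s^k / k!`
(the integral interpreted as a symmetric improper integral). -/
theorem residue_poisson_weight (s : ℝ) (hs : 0 < s) (k : ℕ) :
    Tendsto (fun R : ℝ =>
        (1 / (2 * (Real.pi : ℂ))) *
          ∫ b in (-R)..R,
            ((-Complex.I) / ((b : ℂ) - Complex.I)) ^ (k + 1) *
              Complex.exp (Complex.I * (s : ℂ) * (b : ℂ)))
      atTop
      (nhds ((Real.exp (-s) * s ^ k / (Nat.factorial k) : ℝ) : ℂ)) := by
  have hπC : ((Real.pi:ℝ):ℂ) ≠ 0 := by exact_mod_cast Real.pi_ne_zero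
  have hbase : Tendsto (fun R : ℝ => ∫ b in (-R)..R, G s (k+1) b) atTop
      (nhds (2*Real.pi * ((s:ℂ)^k * Complex.exp (-(s:ℂ)) / (Nat.factorial k)))) := by
    cases k with
    | zero => simpa using tendsto_G_one s hs
    | succ n => exact tendsto_G_ge s hs (n+1) (by omega)
  have h2 := hbase.const_mul (1/(2*(Real.pi:ℂ)))
  have hfac : ((Nat.factorial k : ℂ)) ≠ 0 := by
    exact_mod_cast Nat.cast_ne_zero.mpr (Nat.factorial_ne_zero k)
  have hval : (1/(2*(Real.pi:ℂ))) * (2*Real.pi * ((s:ℂ)^k * Complex.exp (-(s:ℂ)) / (Nat.factorial k)))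
      = ((Real.exp (-s) * s ^ k / (Nat.factorial k) : ℝ) : ℂ) := by
    push_cast [Complex.ofReal_exp]
    field_simp
  rw [hval] at h2
  apply h2.congr
  intro R
  congr 1
  apply intervalIntegral.integral_congr
  intro b _
  have hb : (b:ℂ) - I ≠ 0 := fun h => by simpa using congrArg Complex.im h
  have h1 : ((1:ℂ) + (b:ℝ)*I) ≠ 0 := one_add_mul_I_ne b
  have hbase_eq : (((1:ℂ) + (b:ℝ)*I))⁻¹ = (-I)/((b:ℂ) - I) := by
    rw [inv_eq_one_div, div_eq_div_iff h1 hb]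
    linear_combination (b:ℂ) * Complex.I_sq
  rw [G, ← inv_pow, hbase_eq]

end ResiduePoissonAux
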